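/- Let w₁, w₂ be nonzero complex numbers with |w₁| > |w₂| and let J > 0. Consider the input uniformly distributed over the four points √(J/2)·e^{−i·arg(w₁)}·s for s ∈ {1+i, 1−i, −1+i, −1−i}, and let I₁ and I₂ denote the uniform-4-point-input mutual informations of the per-component one-bit receivers with gains w₁ and w₂, respectively. Then I₁ − I₂ ≥ 2·( h(Q(|w₂|·√(J/2))) − h(Q(|w₁|·√(J/2))) ) > 0. (Appendix: rotated QPSK achieves a positive secrecy rate for the complex Gaussian wiretap channel with one-bit ADCs at both receivers whenever |w₁| > |w₂|.) -/

import Mathlib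

open MeasureTheory Real Filter

open Set

/-- The standard Gaussian tail function `Q(x) = ∫_x^∞ (2π)^{-1/2} e^{-u²/2} du`. -/
noncomputable def gaussQ (x : ℝ) : ℝ :=
  ∫ u in Set.Ioi x, (Real.sqrt (2 * Real.pi))⁻¹ * Real.exp (-u ^ 2 / 2)

noncomputable def gpdf (x : ℝ) : ℝ := (Real.sqrt (2 * Real.pi))⁻¹ * Real.exp (-x ^ 2 / 2)

lemma gpdf_pos (x : ℝ) : 0 < gpdf x := by
  have h : (0:ℝ) < Real.sqrt (2 * Real.pi) := Real.sqrt_pos.2 (by positivity)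
  exact mul_pos (inv_pos.2 h) (Real.exp_pos _)

lemma gpdf_even (x : ℝ) : gpdf (-x) = gpdf x := by simp [gpdf]

lemma continuous_gpdf : Continuous gpdf := by
  unfold gpdf; fun_prop

lemma gpdf_fun_eq : gpdf = fun x : ℝ => (Real.sqrt (2 * Real.pi))⁻¹ * Real.exp (-(1/2) * x ^ 2) := by
  funext x; unfold gpdf; congr 2; ring

lemma integrable_gpdf : Integrable gpdf := by
  rw [gpdf_fun_eq]
  exact (integrable_exp_neg_mul_sq (by norm_num)).const_mul _

lemma integral_gpdf : ∫ x, gpdf x = 1 := by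
  have h : ∫ x : ℝ, Real.exp (-(1/2) * x ^ 2) = Real.sqrt (Real.pi / (1/2)) :=
    integral_gaussian (1/2)
  have h2 : ∫ x, gpdf x = (Real.sqrt (2 * Real.pi))⁻¹ * ∫ x : ℝ, Real.exp (-(1/2) * x ^ 2) := by
    rw [← integral_const_mul, gpdf_fun_eq]
  rw [h2, h]
  have : Real.pi / (1/2) = 2 * Real.pi := by ring
  rw [this]
  have : (0:ℝ) < Real.sqrt (2 * Real.pi) := Real.sqrt_pos.2 (by positivity)
  field_simp

lemma gaussQ_eq (x : ℝ) : gaussQ x = ∫ u in Set.Ioi x, gpdf u := rfl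

lemma gaussQ_add_neg (x : ℝ) : gaussQ x + gaussQ (-x) = 1 := by
  have h1 : gaussQ (-x) = ∫ u in Set.Iic x, gpdf u := by
    rw [gaussQ_eq]
    have : (∫ u in Set.Ioi (-x), gpdf u) = ∫ u in Set.Ioi (-x), gpdf (-u) := by
      refine setIntegral_congr_fun measurableSet_Ioi fun u _ => (gpdf_even u).symm
    rw [this, integral_comp_neg_Ioi, neg_neg]
  rw [gaussQ_eq, h1, add_comm, intervalIntegral.integral_Iic_add_Ioi integrable_gpdf.integrableOn
    integrable_gpdf.integrableOn, integral_gpdf]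

lemma gaussQ_pos (x : ℝ) : 0 < gaussQ x := by
  rw [gaussQ_eq]
  rw [setIntegral_pos_iff_support_of_nonneg_ae]
  · have : Function.support gpdf = Set.univ := by
      ext u; simp [Function.mem_support, (gpdf_pos u).ne']
    rw [this, Set.univ_inter]
    simp [Real.volume_Ioi]
  · exact Eventually.of_forall fun u => (gpdf_pos u).le
  · exact integrable_gpdf.integrableOn

lemma gaussQ_lt_one (x : ℝ) : gaussQ x < 1 := by
  have := gaussQ_add_neg x
  have := gaussQ_pos (-x)
  linarith

lemma gaussQ_sub_eq (a b : ℝ) (hab : a ≤ b) :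
    gaussQ a - gaussQ b = ∫ u in a..b, gpdf u := by
  rw [intervalIntegral.integral_of_le hab, gaussQ_eq, gaussQ_eq]
  have hsplit : (∫ u in Set.Ioi a, gpdf u)
      = (∫ u in Set.Ioc a b, gpdf u) + ∫ u in Set.Ioi b, gpdf u := by
    rw [← setIntegral_union (Set.Ioc_disjoint_Ioi le_rfl) measurableSet_Ioi
      integrable_gpdf.integrableOn integrable_gpdf.integrableOn, Set.Ioc_union_Ioi_eq_Ioi hab]
  rw [hsplit]; ring

lemma gaussQ_as_integral (x : ℝ) : gaussQ x = gaussQ 0 - ∫ u in (0:ℝ)..x, gpdf u := by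
  rcases le_total 0 x with h | h
  · rw [← gaussQ_sub_eq 0 x h]; ring
  · rw [intervalIntegral.integral_symm, ← gaussQ_sub_eq x 0 h]; ring

lemma hasDerivAt_gaussQ (x : ℝ) : HasDerivAt gaussQ (-gpdf x) x := by
  have h : HasDerivAt (fun y => ∫ u in (0:ℝ)..y, gpdf u) (gpdf x) x := by
    refine intervalIntegral.integral_hasDerivAt_right
      (integrable_gpdf.intervalIntegrable)
      (continuous_gpdf.stronglyMeasurableAtFilter _ _) continuous_gpdf.continuousAt
  have h2 : HasDerivAt (fun y => gaussQ 0 - ∫ u in (0:ℝ)..y, gpdf u) (0 - gpdf x) x := (hasDerivAt_const x (gaussQ 0)).sub h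
  have : (fun y => gaussQ 0 - ∫ u in (0:ℝ)..y, gpdf u) = gaussQ := by
    funext y; rw [gaussQ_as_integral y]
  rw [this] at h2; simpa using h2

lemma continuous_gaussQ : Continuous gaussQ :=
  continuous_iff_continuousAt.2 fun x => (hasDerivAt_gaussQ x).continuousAt

lemma strictAnti_gaussQ : StrictAnti gaussQ := by
  refine strictAnti_of_deriv_neg fun x => ?_
  rw [(hasDerivAt_gaussQ x).deriv]
  simpa using gpdf_pos x

lemma gaussQ_zero : gaussQ 0 = 1/2 := by
  have := gaussQ_add_neg 0
  simp at this; linarith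

lemma tendsto_gaussQ_atTop : Tendsto gaussQ atTop (nhds 0) := by
  have h := intervalIntegral_tendsto_integral_Ioi (0:ℝ)
    (integrable_gpdf.integrableOn) tendsto_id
  have h2 : Tendsto (fun b => gaussQ 0 - ∫ u in (0:ℝ)..b, gpdf u) atTop
      (nhds (gaussQ 0 - ∫ u in Set.Ioi (0:ℝ), gpdf u)) := (tendsto_const_nhds.sub h)
  rw [← gaussQ_eq, sub_self] at h2
  refine h2.congr fun b => (gaussQ_as_integral b).symm

lemma hasDerivAt_gpdf (x : ℝ) : HasDerivAt gpdf (-x * gpdf x) x := by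
  have h1 : HasDerivAt (fun y : ℝ => -y ^ 2 / 2) (-x) x := by
    have := ((hasDerivAt_pow 2 x).neg).div_const 2
    refine this.congr_deriv ?_; push_cast; ring
  have h2 := (Real.hasDerivAt_exp (-x ^ 2 / 2)).comp x h1
  have h3 := h2.const_mul (Real.sqrt (2 * Real.pi))⁻¹
  have hg : gpdf = fun y => (Real.sqrt (2 * Real.pi))⁻¹ * Real.exp (-y ^ 2 / 2) := rfl
  rw [hg]
  refine h3.congr_deriv ?_
  simp [gpdf]; ring

/-- helper: f 0 ≤ f x when f has nonneg derivative on [0,∞) -/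
lemma le_of_deriv_nonneg_aux {f f' : ℝ → ℝ}
    (hd : ∀ x, 0 ≤ x → HasDerivAt f (f' x) x)
    (h0 : ∀ x, 0 ≤ x → 0 ≤ f' x) {x : ℝ} (hx : 0 ≤ x) : f 0 ≤ f x := by
  have hmono : MonotoneOn f (Set.Ici (0:ℝ)) := by
    refine monotoneOn_of_deriv_nonneg (convex_Ici 0)
      (fun y hy => (hd y hy).continuousAt.continuousWithinAt)
      (fun y hy => by
        rw [interior_Ici] at hy
        exact (hd y hy.le).differentiableAt.differentiableWithinAt)
      (fun y hy => by
        rw [interior_Ici] at hy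
        rw [(hd y hy.le).deriv]
        exact h0 y hy.le)
  exact hmono Set.self_mem_Ici hx hx

lemma exp_neg_le_quad {t : ℝ} (ht : 0 ≤ t) : Real.exp (-t) ≤ 1 - t + t ^ 2 / 2 := by
  have key : ∀ x : ℝ, 0 ≤ x → (0:ℝ) ≤ (1 - x + x ^ 2 / 2) - Real.exp (-x) := by
    intro x hx
    have := le_of_deriv_nonneg_aux (f := fun y => (1 - y + y ^ 2 / 2) - Real.exp (-y))
      (f' := fun y => (-1 + y) + Real.exp (-y)) ?_ ?_ hx
    · simpa using this
    · intro y _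
      have h1 : HasDerivAt (fun z : ℝ => 1 - z + z ^ 2 / 2) (-1 + y) y := by
        have := (((hasDerivAt_const y (1:ℝ)).sub (hasDerivAt_id y)).add
          ((hasDerivAt_pow 2 y).div_const 2))
        refine this.congr_deriv ?_; push_cast; ring
      have h2 : HasDerivAt (fun z : ℝ => Real.exp (-z)) (-Real.exp (-y)) y := by
        have := (Real.hasDerivAt_exp (-y)).comp y (hasDerivAt_neg y)
        refine this.congr_deriv ?_; ring
      refine (h1.sub h2).congr_deriv ?_; ring
    · intro y hy
      have := Real.add_one_le_exp (-y)
      nlinarith [this]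
  linarith [key t ht]

lemma exp_neg_ge_cubic {t : ℝ} (ht : 0 ≤ t) :
    1 - t + t ^ 2 / 2 - t ^ 3 / 6 ≤ Real.exp (-t) := by
  have key := le_of_deriv_nonneg_aux
    (f := fun y => Real.exp (-y) - (1 - y + y ^ 2 / 2 - y ^ 3 / 6))
    (f' := fun y => -Real.exp (-y) - (-1 + y - y ^ 2 / 2)) ?_ ?_ ht
  · simpa using key
  · intro y _
    have h2 : HasDerivAt (fun z : ℝ => Real.exp (-z)) (-Real.exp (-y)) y := by
      have := (Real.hasDerivAt_exp (-y)).comp y (hasDerivAt_neg y)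
      refine this.congr_deriv ?_; ring
    have h1 : HasDerivAt (fun z : ℝ => 1 - z + z ^ 2 / 2 - z ^ 3 / 6) (-1 + y - y ^ 2 / 2) y := by
      have := ((((hasDerivAt_const y (1:ℝ)).sub (hasDerivAt_id y)).add
        ((hasDerivAt_pow 2 y).div_const 2)).sub ((hasDerivAt_pow 3 y).div_const 6))
      refine this.congr_deriv ?_; push_cast; ring
    exact h2.sub h1
  · intro y hy
    have := exp_neg_le_quad hy
    nlinarith [this]

lemma intpoly6 (x : ℝ) :
    ∫ u in (0:ℝ)..x, gpdf 0 * (1 - u ^ 2 / 2 + u ^ 4 / 8 - u ^ 6 / 48)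
      = gpdf 0 * (x - x ^ 3 / 6 + x ^ 5 / 40 - x ^ 7 / 336) := by
  have hP : ∀ u : ℝ, HasDerivAt
      (fun v => gpdf 0 * (v - v ^ 3 / 6 + v ^ 5 / 40 - v ^ 7 / 336))
      (gpdf 0 * (1 - u ^ 2 / 2 + u ^ 4 / 8 - u ^ 6 / 48)) u := by
    intro u
    have h := ((((hasDerivAt_id u).sub ((hasDerivAt_pow 3 u).div_const 6)).add
      ((hasDerivAt_pow 5 u).div_const 40)).sub
      ((hasDerivAt_pow 7 u).div_const 336)).const_mul (gpdf 0)
    refine h.congr_deriv ?_; push_cast; ring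
  rw [intervalIntegral.integral_eq_sub_of_hasDerivAt (fun u _ => hP u)
    ((by fun_prop : Continuous fun u : ℝ => gpdf 0 * (1 - u ^ 2 / 2 + u ^ 4 / 8 - u ^ 6 / 48)).intervalIntegrable _ _)]
  ring

lemma intpoly4 (x : ℝ) :
    ∫ u in (0:ℝ)..x, gpdf 0 * (1 - u ^ 2 / 2 + u ^ 4 / 8)
      = gpdf 0 * (x - x ^ 3 / 6 + x ^ 5 / 40) := by
  have hP : ∀ u : ℝ, HasDerivAt
      (fun v => gpdf 0 * (v - v ^ 3 / 6 + v ^ 5 / 40))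
      (gpdf 0 * (1 - u ^ 2 / 2 + u ^ 4 / 8)) u := by
    intro u
    have h := (((hasDerivAt_id u).sub ((hasDerivAt_pow 3 u).div_const 6)).add
      ((hasDerivAt_pow 5 u).div_const 40)).const_mul (gpdf 0)
    refine h.congr_deriv ?_; push_cast; ring
  rw [intervalIntegral.integral_eq_sub_of_hasDerivAt (fun u _ => hP u)
    ((by fun_prop : Continuous fun u : ℝ => gpdf 0 * (1 - u ^ 2 / 2 + u ^ 4 / 8)).intervalIntegrable _ _)]
  ring

lemma gpdf_zero : gpdf 0 = (Real.sqrt (2 * Real.pi))⁻¹ := by simp [gpdf]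

lemma gpdf_eq (u : ℝ) : gpdf u = gpdf 0 * Real.exp (-u ^ 2 / 2) := by
  rw [gpdf_zero]; rfl

lemma D_lower {x : ℝ} (hx : 0 ≤ x) :
    gpdf 0 * (x - x ^ 3 / 6 + x ^ 5 / 40 - x ^ 7 / 336) ≤ ∫ u in (0:ℝ)..x, gpdf u := by
  rw [← intpoly6]
  refine intervalIntegral.integral_mono_on hx
    ((by fun_prop : Continuous fun u : ℝ => gpdf 0 * (1 - u ^ 2 / 2 + u ^ 4 / 8 - u ^ 6 / 48)).intervalIntegrable _ _)
    (integrable_gpdf.intervalIntegrable) (fun u _ => ?_)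
  rw [gpdf_eq u]
  have h := exp_neg_ge_cubic (t := u ^ 2 / 2) (by positivity)
  have hc : 0 < gpdf 0 := gpdf_pos 0
  have harg : -u ^ 2 / 2 = -(u ^ 2 / 2) := by ring
  rw [harg]
  nlinarith [h]

lemma D_upper {x : ℝ} (hx : 0 ≤ x) :
    (∫ u in (0:ℝ)..x, gpdf u) ≤ gpdf 0 * (x - x ^ 3 / 6 + x ^ 5 / 40) := by
  rw [← intpoly4]
  refine intervalIntegral.integral_mono_on hx
    (integrable_gpdf.intervalIntegrable)
    ((by fun_prop : Continuous fun u : ℝ => gpdf 0 * (1 - u ^ 2 / 2 + u ^ 4 / 8)).intervalIntegrable _ _)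
    (fun u _ => ?_)
  rw [gpdf_eq u]
  have h := exp_neg_le_quad (t := u ^ 2 / 2) (by positivity)
  have hc : 0 < gpdf 0 := gpdf_pos 0
  have harg : -u ^ 2 / 2 = -(u ^ 2 / 2) := by ring
  rw [harg]
  nlinarith [h]

lemma sqrt_two_pi_bounds : 2.506 ≤ Real.sqrt (2 * Real.pi) ∧ Real.sqrt (2 * Real.pi) ≤ 2.5067 := by
  constructor
  · rw [show (2.506:ℝ) = Real.sqrt (2.506 ^ 2) from (Real.sqrt_sq (by norm_num)).symm]
    exact Real.sqrt_le_sqrt (by nlinarith [Real.pi_gt_d6])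
  · rw [show (2.5067:ℝ) = Real.sqrt (2.5067 ^ 2) from (Real.sqrt_sq (by norm_num)).symm]
    exact Real.sqrt_le_sqrt (by nlinarith [Real.pi_lt_d6])

lemma gpdf_zero_lb : 0.3989 ≤ gpdf 0 := by
  rw [gpdf_zero]
  have h := sqrt_two_pi_bounds.2
  have hpos : (0:ℝ) < Real.sqrt (2 * Real.pi) := Real.sqrt_pos.2 (by positivity)
  have hinv : (0:ℝ) < (Real.sqrt (2 * Real.pi))⁻¹ := inv_pos.2 hpos
  have hmul : Real.sqrt (2 * Real.pi) * (Real.sqrt (2 * Real.pi))⁻¹ = 1 :=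
    mul_inv_cancel₀ hpos.ne'
  nlinarith [h, hinv, hmul]

lemma gpdf_zero_ub : gpdf 0 ≤ 0.399045 := by
  rw [gpdf_zero]
  have h := sqrt_two_pi_bounds.1
  have hpos : (0:ℝ) < Real.sqrt (2 * Real.pi) := Real.sqrt_pos.2 (by positivity)
  have hinv : (0:ℝ) < (Real.sqrt (2 * Real.pi))⁻¹ := inv_pos.2 hpos
  have hmul : Real.sqrt (2 * Real.pi) * (Real.sqrt (2 * Real.pi))⁻¹ = 1 :=
    mul_inv_cancel₀ hpos.ne'
  nlinarith [h, hinv, hmul]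

lemma gpdf_zero_sq : (gpdf 0) ^ 2 = (2 * Real.pi)⁻¹ := by
  rw [gpdf_zero, ← Real.sqrt_inv, Real.sq_sqrt (by positivity)]

lemma gaussQ_one_le : gaussQ 1 ≤ 1/6 := by
  have h := D_lower (x := 1) zero_le_one
  have h2 : gaussQ 1 = gaussQ 0 - ∫ u in (0:ℝ)..1, gpdf u := gaussQ_as_integral 1
  have h3 := gpdf_zero_lb
  rw [gaussQ_zero] at h2
  norm_num at h
  nlinarith [h, h3]

lemma mills {x : ℝ} (hx : 0 ≤ x) : x * gpdf x ≤ gaussQ x * (x ^ 2 + 1) := by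
  set M : ℝ → ℝ := fun y => gaussQ y - y * gpdf y / (y ^ 2 + 1) with hM
  have hden : ∀ y : ℝ, (y:ℝ) ^ 2 + 1 ≠ 0 := fun y => by positivity
  have hderiv : ∀ y : ℝ, HasDerivAt M (-2 * gpdf y / (y ^ 2 + 1) ^ 2) y := by
    intro y
    have h1 : HasDerivAt (fun z : ℝ => z * gpdf z) (gpdf y + y * (-y * gpdf y)) y :=
      (hasDerivAt_id y).mul (hasDerivAt_gpdf y) |>.congr_deriv (by simp)
    have h2 : HasDerivAt (fun z : ℝ => z ^ 2 + 1) (2 * y) y := by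
      have := (hasDerivAt_pow 2 y).add_const 1
      refine this.congr_deriv ?_; push_cast; ring
    have h3 := h1.div h2 (hden y)
    have h4 := (hasDerivAt_gaussQ y).sub h3
    refine h4.congr_deriv ?_
    rw [gpdf_eq y]
    field_simp
    ring
  have hanti : StrictAnti M := by
    refine strictAnti_of_deriv_neg fun y => ?_
    rw [(hderiv y).deriv]
    have := gpdf_pos y
    have : (0:ℝ) < (y ^ 2 + 1) ^ 2 := by positivity
    have := gpdf_pos y
    apply div_neg_of_neg_of_pos <;> nlinarith [gpdf_pos y]
  have hlim : Tendsto M atTop (nhds 0) := by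
    have ht1 : Tendsto (fun y : ℝ => y * gpdf y / (y ^ 2 + 1)) atTop (nhds 0) := by
      have hb : ∀ᶠ y : ℝ in atTop, y * gpdf y / (y ^ 2 + 1) ≤ gpdf 0 / y := by
        filter_upwards [eventually_ge_atTop (1:ℝ)] with y hy
        have h1 : gpdf y ≤ gpdf 0 := by
          rw [gpdf_eq y]
          nlinarith [Real.exp_le_one_iff.2 (by nlinarith : -y^2/2 ≤ 0), gpdf_pos 0,
            Real.exp_pos (-y^2/2)]
        rw [div_le_div_iff₀ (by positivity) (by nlinarith)]
        nlinarith [gpdf_pos y, gpdf_pos 0]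
      have hb0 : ∀ᶠ y : ℝ in atTop, 0 ≤ y * gpdf y / (y ^ 2 + 1) := by
        filter_upwards [eventually_ge_atTop (0:ℝ)] with y hy
        have := gpdf_pos y
        positivity
      have hlim2 : Tendsto (fun y : ℝ => gpdf 0 / y) atTop (nhds 0) :=
        tendsto_const_nhds.div_atTop tendsto_id
      exact tendsto_of_tendsto_of_tendsto_of_le_of_le'
        (tendsto_const_nhds) hlim2 hb0 hb
    have := tendsto_gaussQ_atTop.sub ht1
    simpa using this
  have hge : (0:ℝ) ≤ M x := by
    refine le_of_tendsto hlim ?_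
    filter_upwards [eventually_ge_atTop x] with y hy
    exact (hanti.antitone hy)
  have : x * gpdf x / (x ^ 2 + 1) ≤ gaussQ x := by
    simp only [hM] at hge; linarith
  calc x * gpdf x = (x * gpdf x / (x ^ 2 + 1)) * (x ^ 2 + 1) := by field_simp
    _ ≤ gaussQ x * (x ^ 2 + 1) := by
        have : (0:ℝ) < x ^ 2 + 1 := by positivity
        nlinarith [this]

lemma polyA {t : ℝ} (h0 : 0 ≤ t) (h1 : t ≤ 1) :
    (637/1000) * (1 - t/6 + t^2/40)^3 * (1 + t) ≤ 4/3 - (4/15)*t + (37/1680)*t^2 - t^3/336 := by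
  nlinarith [sq_nonneg t, sq_nonneg (1-t), mul_nonneg h0 (sub_nonneg.2 h1),
    pow_le_one₀ h0 h1 (n := 2), mul_nonneg (mul_nonneg h0 h0) h0,
    sq_nonneg (t*(1-t)), mul_nonneg (mul_nonneg h0 h0) (sub_nonneg.2 h1)]

lemma polyB {x : ℝ} (h0 : 0 ≤ x) (h1 : x ≤ 1) :
    x * (1 - x^2/2 + x^4/8) + (637/1000) * (x - x^3/6 + x^5/40)^3 * (x^2+1)
      ≤ (x - x^3/6 + x^5/40 - x^7/336) * (x^2+1) := by
  have hA := polyA (t := x^2) (by positivity) (by nlinarith)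
  have h := mul_le_mul_of_nonneg_left hA (pow_nonneg h0 3)
  nlinarith [h]

lemma four_c_sq : 4 * (gpdf 0)^2 ≤ 637/1000 := by
  rw [gpdf_zero_sq]
  have hπ := Real.pi_gt_d6
  have hpos : (0:ℝ) < 2 * Real.pi := by positivity
  have hmul : (2 * Real.pi)⁻¹ * (2 * Real.pi) = 1 := inv_mul_cancel₀ hpos.ne'
  have hinv : (0:ℝ) < (2 * Real.pi)⁻¹ := inv_pos.2 hpos
  nlinarith [hmul, hinv, hπ]

set_option maxHeartbeats 1000000 in
lemma master {x : ℝ} (hx : 0 < x) :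
    x * gpdf x ≤ 2 * (1 - 2 * gaussQ x) * gaussQ x * gaussQ (-x) * (x^2 + 1) := by
  have hneg : gaussQ (-x) = 1 - gaussQ x := by linarith [gaussQ_add_neg x]
  rcases le_total x 1 with hx1 | hx1
  · -- small x regime
    set I := ∫ u in (0:ℝ)..x, gpdf u with hI
    set c := gpdf 0 with hc
    have hlo' := D_lower hx.le
    have hhi' := D_upper hx.le
    have hlo : c * (x - x^3/6 + x^5/40 - x^7/336) ≤ I := hlo'
    have hhi : I ≤ c * (x - x^3/6 + x^5/40) := hhi'
    have hx2 : x^2 ≤ 1 := by nlinarith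
    have hx4 : x^4 ≤ 1 := by nlinarith [hx2, sq_nonneg x]
    have hx6 : x^6 ≤ 1 := by nlinarith [hx2, hx4, sq_nonneg x, pow_nonneg hx.le 4]
    have h3le : x^3 ≤ x := by nlinarith [mul_nonneg hx.le (sub_nonneg.2 hx2)]
    have h5le : x^5 ≤ x := by nlinarith [mul_nonneg hx.le (sub_nonneg.2 hx4)]
    have h7le : x^7 ≤ x := by nlinarith [mul_nonneg hx.le (sub_nonneg.2 hx6)]
    have h5nn : (0:ℝ) ≤ x^5 := by positivity
    have hQ : gaussQ x = 1/2 - I := by rw [gaussQ_as_integral x, gaussQ_zero]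
    have hcpos : 0 < c := gpdf_pos 0
    have hT6nn : 0 ≤ x - x^3/6 + x^5/40 - x^7/336 := by linarith
    have hT4nn : 0 ≤ x - x^3/6 + x^5/40 := by linarith
    have hI0 : 0 ≤ I := le_trans (by positivity) hlo
    have hIcube : I^3 ≤ (c * (x - x^3/6 + x^5/40))^3 :=
      pow_le_pow_left₀ hI0 hhi 3
    have hE : x * gpdf x ≤ x * c * (1 - x^2/2 + x^4/8) := by
      rw [gpdf_eq x]
      have h := exp_neg_le_quad (t := x^2/2) (by positivity)
      have harg : -x^2/2 = -(x^2/2) := by ring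
      rw [harg]
      nlinarith [mul_le_mul_of_nonneg_left h (mul_nonneg hx.le hcpos.le)]
    have hRHS : 2 * (1 - 2 * gaussQ x) * gaussQ x * gaussQ (-x) * (x^2 + 1)
        = (I - 4 * I^3) * (x^2 + 1) := by
      rw [hneg, hQ]; ring
    rw [hRHS]
    have hkey : x * c * (1 - x^2/2 + x^4/8) ≤ (I - 4 * I^3) * (x^2+1) := by
      have hstep : c * (x - x^3/6 + x^5/40 - x^7/336) - 4 * (c * (x - x^3/6 + x^5/40))^3
          ≤ I - 4 * I^3 := by linarith [hlo, hIcube]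
      have hmono : x * c * (1 - x^2/2 + x^4/8)
          ≤ (c * (x - x^3/6 + x^5/40 - x^7/336) - 4 * (c*(x - x^3/6 + x^5/40))^3) * (x^2+1) := by
        have hpBc := mul_le_mul_of_nonneg_left (polyB hx.le hx1) hcpos.le
        have hnn : (0:ℝ) ≤ c * ((x - x^3/6 + x^5/40)^3 * (x^2+1)) := by positivity
        have h2 := mul_le_mul_of_nonneg_right four_c_sq hnn
        linarith [hpBc, h2]
      calc x * c * (1 - x^2/2 + x^4/8)
          ≤ (c * (x - x^3/6 + x^5/40 - x^7/336) - 4 * (c*(x - x^3/6 + x^5/40))^3) * (x^2+1) := hmono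
        _ ≤ (I - 4 * I^3) * (x^2+1) :=
            mul_le_mul_of_nonneg_right hstep (by positivity)
    linarith [hE, hkey]
  · -- large x regime
    have hQ16 : gaussQ x ≤ 1/6 :=
      le_trans (strictAnti_gaussQ.antitone hx1) gaussQ_one_le
    have hQpos := gaussQ_pos x
    calc x * gpdf x ≤ gaussQ x * (x^2 + 1) := mills hx.le
      _ ≤ 2 * (1 - 2 * gaussQ x) * gaussQ x * gaussQ (-x) * (x^2 + 1) := by
          rw [hneg]
          have hx2 : (0:ℝ) < x^2 + 1 := by positivity
          nlinarith [mul_nonneg (mul_nonneg hx2.le hQpos.le)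
            (by nlinarith : (0:ℝ) ≤ 1 - 6 * gaussQ x + 4 * (gaussQ x)^2)]

/-- `η(t) = -t log t` (with `η(0) = 0`, automatic since `Real.log 0 = 0`). -/
noncomputable def eta (t : ℝ) : ℝ := -t * Real.log t

/-- The binary entropy function `h(p) = -p log p - (1-p) log (1-p)`. -/
noncomputable def binEnt (p : ℝ) : ℝ := eta p + eta (1 - p)

/-- Sign value of a Boolean: `true ↦ +1`, `false ↦ -1`. -/
noncomputable def sgnb (b : Bool) : ℝ := if b then 1 else -1

/-- Transition probability of the complex Gaussian channel with gain `w` followed by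
per-component one-bit ADCs: `P((s_R,s_I)|x) = Q(-s_R·Re(wx))·Q(-s_I·Im(wx))`. -/
noncomputable def p1bitC (w x : ℂ) (s : Bool × Bool) : ℝ :=
  gaussQ (-(sgnb s.1) * (w * x).re) * gaussQ (-(sgnb s.2) * (w * x).im)

/-- Mutual information of the per-component one-bit receiver with gain `w` for an
input uniformly distributed over the four points `pts s`, `s : Bool × Bool`. -/
noncomputable def miUnif4 (w : ℂ) (pts : Bool × Bool → ℂ) : ℝ :=
  ∑ y : Bool × Bool,
    (eta ((1 / 4) * ∑ s : Bool × Bool, p1bitC w (pts s) y)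
      - (1 / 4) * ∑ s : Bool × Bool, eta (p1bitC w (pts s) y))

/-- The QPSK constellation of power `J` rotated by `-arg w₁`:
the four points `√(J/2)·e^{-i·arg(w₁)}·(±1 ± i)`. -/
noncomputable def qpskPts (w₁ : ℂ) (J : ℝ) (s : Bool × Bool) : ℂ :=
  (Real.sqrt (J / 2) : ℂ) * Complex.exp (-(Complex.arg w₁ : ℂ) * Complex.I)
    * ((sgnb s.1 : ℂ) + (sgnb s.2 : ℂ) * Complex.I)

lemma eta_eq_negMulLog : eta = Real.negMulLog := rfl

lemma hasDerivAt_eta {p : ℝ} (hp : p ≠ 0) : HasDerivAt eta (-Real.log p - 1) p := by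
  rw [eta_eq_negMulLog]; exact Real.hasDerivAt_negMulLog hp

lemma continuous_eta : Continuous eta := by
  rw [eta_eq_negMulLog]; exact Real.continuous_negMulLog

/-- helper: monotonicity on Ico 0 1 -/
lemma le_of_deriv_nonneg_Ico {f f' : ℝ → ℝ}
    (hd : ∀ x, 0 ≤ x → x < 1 → HasDerivAt f (f' x) x)
    (h0 : ∀ x, 0 ≤ x → x < 1 → 0 ≤ f' x) {x : ℝ} (hx : 0 ≤ x) (hx1 : x < 1) :
    f 0 ≤ f x := by
  have hmono : MonotoneOn f (Set.Ico (0:ℝ) 1) := by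
    refine monotoneOn_of_deriv_nonneg (convex_Ico 0 1)
      (fun y hy => (hd y hy.1 hy.2).continuousAt.continuousWithinAt)
      (fun y hy => by
        rw [interior_Ico] at hy
        exact (hd y hy.1.le hy.2).differentiableAt.differentiableWithinAt)
      (fun y hy => by
        rw [interior_Ico] at hy
        rw [(hd y hy.1.le hy.2).deriv]
        exact h0 y hy.1.le hy.2)
  exact hmono ⟨le_refl 0, one_pos⟩ ⟨hx, hx1⟩ hx

lemma artanh_ge {d : ℝ} (h0 : 0 ≤ d) (h1 : d < 1) :
    2 * d ≤ Real.log (1 + d) - Real.log (1 - d) := by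
  have key := le_of_deriv_nonneg_Ico
    (f := fun y => Real.log (1 + y) - Real.log (1 - y) - 2 * y)
    (f' := fun y => 1 / (1 + y) + 1 / (1 - y) - 2) ?_ ?_ h0 h1
  · simp at key; linarith
  · intro y hy0 hy1
    have ha : (0:ℝ) < 1 + y := by linarith
    have hb : (0:ℝ) < 1 - y := by linarith
    have d1 : HasDerivAt (fun z : ℝ => Real.log (1 + z)) (1 / (1 + y)) y := by
      have hinner : HasDerivAt (fun z : ℝ => 1 + z) 1 y := by
        simpa using (hasDerivAt_id y).const_add (1:ℝ)
      have := (Real.hasDerivAt_log ha.ne').comp y hinner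
      refine this.congr_deriv ?_; simp [one_div]
    have d2 : HasDerivAt (fun z : ℝ => Real.log (1 - z)) (-(1 / (1 - y))) y := by
      have hinner : HasDerivAt (fun z : ℝ => 1 - z) (-1) y := by
        simpa using (hasDerivAt_id y).const_sub (1:ℝ)
      have := (Real.hasDerivAt_log hb.ne').comp y hinner
      refine this.congr_deriv ?_; field_simp
    have d3 : HasDerivAt (fun z : ℝ => 2 * z) 2 y := by
      simpa using (hasDerivAt_id y).const_mul (2:ℝ)
    have := (d1.sub d2).sub d3
    refine this.congr_deriv ?_; ring
  · intro y hy0 hy1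
    have ha : (0:ℝ) < 1 + y := by linarith
    have hb : (0:ℝ) < 1 - y := by linarith
    show 0 ≤ 1 / (1 + y) + 1 / (1 - y) - 2
    have heq : 1 / (1 + y) + 1 / (1 - y) - 2 = 2 * y ^ 2 / ((1 + y) * (1 - y)) := by
      field_simp; ring
    rw [heq]; positivity

lemma log_ratio_ge {q : ℝ} (h0 : 0 < q) (h2 : q ≤ 1/2) :
    2 * (1 - 2 * q) ≤ Real.log (1 - q) - Real.log q := by
  have hd0 : 0 ≤ 1 - 2 * q := by linarith
  have hd1 : 1 - 2 * q < 1 := by linarith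
  have h := artanh_ge hd0 hd1
  have e1 : 1 + (1 - 2 * q) = 2 * (1 - q) := by ring
  have e2 : 1 - (1 - 2 * q) = 2 * q := by ring
  rw [e1, e2, Real.log_mul (by norm_num) (by linarith), Real.log_mul (by norm_num) h0.ne'] at h
  linarith

noncomputable def Lf (x : ℝ) : ℝ := Real.log (gaussQ (-x)) - Real.log (gaussQ x)

noncomputable def gfun (x : ℝ) : ℝ := Lf x * (gpdf x / x)

lemma hasDerivAt_gaussQ_neg (x : ℝ) : HasDerivAt (fun y => gaussQ (-y)) (gpdf x) x := by
  have := (hasDerivAt_gaussQ (-x)).comp x (hasDerivAt_neg x)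
  refine this.congr_deriv ?_
  rw [gpdf_even]; ring

lemma hasDerivAt_Lf (x : ℝ) :
    HasDerivAt Lf (gpdf x / (gaussQ x * gaussQ (-x))) x := by
  have hQ := gaussQ_pos x
  have hQn := gaussQ_pos (-x)
  have d1 := (Real.hasDerivAt_log hQn.ne').comp x (hasDerivAt_gaussQ_neg x)
  have d2 := (Real.hasDerivAt_log hQ.ne').comp x (hasDerivAt_gaussQ x)
  have := d1.sub d2
  have hsum : gaussQ (-x) = 1 - gaussQ x := by linarith [gaussQ_add_neg x]
  refine this.congr_deriv ?_
  rw [hsum]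
  have h1 : gaussQ x ≠ 0 := hQ.ne'
  have h2 : (1:ℝ) - gaussQ x ≠ 0 := by rw [← hsum]; exact hQn.ne'
  field_simp
  ring

lemma hasDerivAt_gfun {x : ℝ} (hx : x ≠ 0) :
    HasDerivAt gfun
      (gpdf x / (gaussQ x * gaussQ (-x)) * (gpdf x / x)
        + Lf x * ((-x * gpdf x * x - gpdf x) / x ^ 2)) x := by
  have hdiv : HasDerivAt (fun y => gpdf y / y) ((-x * gpdf x * x - gpdf x * 1) / x ^ 2) x :=
    (hasDerivAt_gpdf x).div (hasDerivAt_id x) hx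
  have := (hasDerivAt_Lf x).mul hdiv
  refine this.congr_deriv ?_
  ring

lemma gaussQ_lt_half {x : ℝ} (hx : 0 < x) : gaussQ x < 1/2 := by
  have := strictAnti_gaussQ hx
  rwa [gaussQ_zero] at this

lemma Lf_ge {x : ℝ} (hx : 0 < x) : 2 * (1 - 2 * gaussQ x) ≤ Lf x := by
  have h := log_ratio_ge (gaussQ_pos x) (gaussQ_lt_half hx).le
  have hsum : gaussQ (-x) = 1 - gaussQ x := by linarith [gaussQ_add_neg x]
  unfold Lf
  rw [hsum]
  exact h

lemma gfun_deriv_nonpos {x : ℝ} (hx : 0 < x) :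
    gpdf x / (gaussQ x * gaussQ (-x)) * (gpdf x / x)
      + Lf x * ((-x * gpdf x * x - gpdf x) / x ^ 2) ≤ 0 := by
  have hQ := gaussQ_pos x
  have hQn := gaussQ_pos (-x)
  have hphi := gpdf_pos x
  have hmaster := master hx
  have hLf := Lf_ge hx
  have hD : 0 ≤ 1 - 2 * gaussQ x := by linarith [gaussQ_lt_half hx]
  have hkey : x * gpdf x ≤ Lf x * (gaussQ x * gaussQ (-x)) * (x ^ 2 + 1) := by
    calc x * gpdf x ≤ 2 * (1 - 2 * gaussQ x) * gaussQ x * gaussQ (-x) * (x ^ 2 + 1) := hmaster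
      _ ≤ Lf x * (gaussQ x * gaussQ (-x)) * (x ^ 2 + 1) := by
          have : (0:ℝ) ≤ gaussQ x * gaussQ (-x) * (x ^ 2 + 1) := by positivity
          nlinarith [mul_le_mul_of_nonneg_right hLf this]
  have hform : gpdf x / (gaussQ x * gaussQ (-x)) * (gpdf x / x)
      + Lf x * ((-x * gpdf x * x - gpdf x) / x ^ 2)
      = gpdf x / (x ^ 2 * (gaussQ x * gaussQ (-x)))
        * (x * gpdf x - Lf x * (gaussQ x * gaussQ (-x)) * (x ^ 2 + 1)) := by
    field_simp
    ring
  rw [hform]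
  apply mul_nonpos_of_nonneg_of_nonpos
  · positivity
  · linarith

lemma gfun_antitoneOn : AntitoneOn gfun (Set.Ioi (0:ℝ)) := by
  refine antitoneOn_of_deriv_nonpos (convex_Ioi 0)
    (fun y hy => (hasDerivAt_gfun (ne_of_gt hy)).continuousAt.continuousWithinAt)
    (fun y hy => by
      rw [interior_Ioi] at hy
      exact (hasDerivAt_gfun (ne_of_gt hy)).differentiableAt.differentiableWithinAt)
    (fun y hy => by
      rw [interior_Ioi] at hy
      rw [(hasDerivAt_gfun (ne_of_gt hy)).deriv]
      exact gfun_deriv_nonpos hy)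

noncomputable def Ff (t : ℝ) : ℝ := eta (gaussQ t) + eta (gaussQ (-t))

lemma Ff_even (t : ℝ) : Ff (-t) = Ff t := by unfold Ff; rw [neg_neg]; ring

lemma binEnt_gaussQ_eq_Ff (t : ℝ) : binEnt (gaussQ t) = Ff t := by
  unfold binEnt Ff
  have hsum : gaussQ (-t) = 1 - gaussQ t := by linarith [gaussQ_add_neg t]
  rw [hsum]

lemma hasDerivAt_Ff (t : ℝ) : HasDerivAt Ff (-gpdf t * Lf t) t := by
  have hQ := gaussQ_pos t
  have hQn := gaussQ_pos (-t)
  have d1 := (hasDerivAt_eta hQ.ne').comp t (hasDerivAt_gaussQ t)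
  have d2 := (hasDerivAt_eta hQn.ne').comp t (hasDerivAt_gaussQ_neg t)
  have := d1.add d2
  refine this.congr_deriv ?_
  unfold Lf
  ring

lemma continuous_Ff : Continuous Ff := by
  unfold Ff
  exact (continuous_eta.comp continuous_gaussQ).add
    (continuous_eta.comp (continuous_gaussQ.comp continuous_neg))

noncomputable def Gf (u : ℝ) : ℝ := Ff (Real.sqrt u)

lemma hasDerivAt_Gf {u : ℝ} (hu : 0 < u) :
    HasDerivAt Gf (-gfun (Real.sqrt u) / 2) u := by
  have hs : 0 < Real.sqrt u := Real.sqrt_pos.2 hu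
  have h := (hasDerivAt_Ff (Real.sqrt u)).comp u (Real.hasDerivAt_sqrt hu.ne')
  refine h.congr_deriv ?_
  unfold gfun
  field_simp

lemma convexOn_Gf : ConvexOn ℝ (Set.Ici (0:ℝ)) Gf := by
  refine MonotoneOn.convexOn_of_deriv (convex_Ici 0)
    ((continuous_Ff.comp Real.continuous_sqrt).continuousOn)
    (fun u hu => by
      rw [interior_Ici] at hu
      exact (hasDerivAt_Gf hu).differentiableAt.differentiableWithinAt)
    ?_
  rw [interior_Ici]
  intro u hu v hv huv
  rw [(hasDerivAt_Gf hu).deriv, (hasDerivAt_Gf hv).deriv]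
  have h := gfun_antitoneOn (Set.mem_Ioi.2 (Real.sqrt_pos.2 hu))
    (Set.mem_Ioi.2 (Real.sqrt_pos.2 hv)) (Real.sqrt_le_sqrt huv)
  linarith

lemma Ff_sqrt_sq (p : ℝ) : Gf (p ^ 2) = Ff p := by
  unfold Gf
  rw [Real.sqrt_sq_eq_abs]
  rcases abs_choice p with h | h
  · rw [h]
  · rw [h, Ff_even]

lemma two_point (p q b : ℝ) (hb : 0 ≤ b) (hpq : p ^ 2 + q ^ 2 = 2 * b ^ 2) :
    2 * Ff b ≤ Ff p + Ff q := by
  have h := convexOn_Gf.2 (Set.mem_Ici.2 (by positivity : (0:ℝ) ≤ p ^ 2))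
    (Set.mem_Ici.2 (by positivity : (0:ℝ) ≤ q ^ 2))
    (by norm_num : (0:ℝ) ≤ (1:ℝ)/2) (by norm_num : (0:ℝ) ≤ (1:ℝ)/2) (by norm_num)
  have hGb : Gf (b ^ 2) = Ff b := by
    unfold Gf; rw [Real.sqrt_sq hb]
  simp only [smul_eq_mul] at h
  rw [Ff_sqrt_sq, Ff_sqrt_sq,
    show (1:ℝ)/2 * p ^ 2 + 1/2 * q ^ 2 = b ^ 2 from by linarith, hGb] at h
  linarith

lemma continuous_binEnt : Continuous binEnt := by
  unfold binEnt
  exact continuous_eta.add (continuous_eta.comp (continuous_const.sub continuous_id))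

lemma hasDerivAt_binEnt {p : ℝ} (h0 : p ≠ 0) (h1 : p ≠ 1) :
    HasDerivAt binEnt (Real.log (1 - p) - Real.log p) p := by
  have d1 := hasDerivAt_eta h0
  have hinner : HasDerivAt (fun q : ℝ => 1 - q) (-1) p := by
    simpa using (hasDerivAt_id p).const_sub (1:ℝ)
  have d2 := (hasDerivAt_eta (sub_ne_zero.2 (Ne.symm h1))).comp p hinner
  have := d1.add d2
  refine this.congr_deriv ?_
  ring

lemma binEnt_strictMono {p q : ℝ} (hp : 0 < p) (hpq : p < q) (hq : q ≤ 1/2) :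
    binEnt p < binEnt q := by
  have hmono : StrictMonoOn binEnt (Set.Icc 0 (1/2)) := by
    refine strictMonoOn_of_deriv_pos (convex_Icc 0 (1/2))
      continuous_binEnt.continuousOn (fun x hx => ?_)
    rw [interior_Icc] at hx
    rw [(hasDerivAt_binEnt (ne_of_gt hx.1) (by linarith [hx.2] : x ≠ 1)).deriv]
    have : x < 1 - x := by linarith [hx.2]
    have hlog := Real.log_lt_log hx.1 this
    linarith
  exact hmono ⟨hp.le, by linarith⟩ ⟨by linarith, hq⟩ hpq

lemma eta_mul {a b : ℝ} (ha : 0 < a) (hb : 0 < b) :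
    eta (a * b) = a * eta b + b * eta a := by
  unfold eta
  rw [Real.log_mul ha.ne' hb.ne']
  ring

lemma eta_le_gibbs {q : ℝ} (hq : 0 ≤ q) : eta q ≤ 1/4 + q * (Real.log 4 - 1) := by
  rcases eq_or_lt_of_le hq with h | h
  · rw [← h]; unfold eta; norm_num
  · have hlog := Real.log_le_sub_one_of_pos (show (0:ℝ) < 1/(4*q) by positivity)
    rw [show (1:ℝ)/(4*q) = (4*q)⁻¹ by ring, Real.log_inv,
      Real.log_mul (by norm_num) h.ne'] at hlog
    unfold eta
    have := mul_le_mul_of_nonneg_left hlog hq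
    have h4 : q * (4*q)⁻¹ = 1/4 := by field_simp
    nlinarith [this, h4]

lemma sum_bb (f : Bool × Bool → ℝ) :
    ∑ y : Bool × Bool, f y = f (true, true) + f (true, false) + f (false, true) + f (false, false) := by
  rw [Fintype.sum_prod_type]
  simp [Fintype.sum_bool]
  ring

lemma sgnb_true : sgnb true = 1 := rfl
lemma sgnb_false : sgnb false = -1 := rfl

lemma rowsum (r m : ℝ) :
    ∑ y : Bool × Bool, gaussQ (-(sgnb y.1) * r) * gaussQ (-(sgnb y.2) * m) = 1 := by
  rw [sum_bb]
  simp only [sgnb_true, sgnb_false]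
  rw [show (-(1:ℝ)) * r = -r by ring, show (-(1:ℝ)) * m = -m by ring,
    show (-(-1:ℝ)) * r = r by ring, show (-(-1:ℝ)) * m = m by ring]
  have h1 := gaussQ_add_neg r
  have h2 := gaussQ_add_neg m
  nlinarith [h1, h2]

lemma eta_rowsum (r m : ℝ) :
    ∑ y : Bool × Bool, eta (gaussQ (-(sgnb y.1) * r) * gaussQ (-(sgnb y.2) * m))
      = binEnt (gaussQ r) + binEnt (gaussQ m) := by
  rw [sum_bb]
  simp only [sgnb_true, sgnb_false]
  rw [show (-(1:ℝ)) * r = -r by ring, show (-(1:ℝ)) * m = -m by ring,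
    show (-(-1:ℝ)) * r = r by ring, show (-(-1:ℝ)) * m = m by ring]
  have hnr : gaussQ (-r) = 1 - gaussQ r := by linarith [gaussQ_add_neg r]
  have hnm : gaussQ (-m) = 1 - gaussQ m := by linarith [gaussQ_add_neg m]
  have h1 := gaussQ_pos r
  have h2 := gaussQ_pos m
  have h3 := gaussQ_pos (-r)
  have h4 := gaussQ_pos (-m)
  rw [eta_mul h3 h4, eta_mul h3 h2, eta_mul h1 h4, eta_mul h1 h2, hnr, hnm]
  unfold binEnt
  ring

noncomputable def PP (p q : ℝ) (s y : Bool × Bool) : ℝ :=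
  gaussQ (-(sgnb y.1) * (p * sgnb s.1 - q * sgnb s.2)) *
  gaussQ (-(sgnb y.2) * (p * sgnb s.2 + q * sgnb s.1))

lemma PP_pos (p q : ℝ) (s y : Bool × Bool) : 0 < PP p q s y :=
  mul_pos (gaussQ_pos _) (gaussQ_pos _)

lemma PP_rowsum (p q : ℝ) (s : Bool × Bool) : ∑ y : Bool × Bool, PP p q s y = 1 :=
  rowsum (p * sgnb s.1 - q * sgnb s.2) (p * sgnb s.2 + q * sgnb s.1)

lemma binEnt_gaussQ_even (t : ℝ) : binEnt (gaussQ (-t)) = binEnt (gaussQ t) := by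
  rw [binEnt_gaussQ_eq_Ff, binEnt_gaussQ_eq_Ff, Ff_even]

lemma hCsum (p q : ℝ) :
    ∑ y : Bool × Bool, (1/4 : ℝ) * ∑ s : Bool × Bool, eta (PP p q s y)
      = binEnt (gaussQ (p - q)) + binEnt (gaussQ (p + q)) := by
  rw [← Finset.mul_sum, Finset.sum_comm]
  have hterm : ∀ s : Bool × Bool, ∑ y : Bool × Bool, eta (PP p q s y)
      = binEnt (gaussQ (p * sgnb s.1 - q * sgnb s.2))
        + binEnt (gaussQ (p * sgnb s.2 + q * sgnb s.1)) :=
    fun s => eta_rowsum _ _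
  rw [Finset.sum_congr rfl (fun s _ => hterm s), sum_bb]
  simp only [sgnb_true, sgnb_false]
  rw [show p * 1 - q * 1 = p - q by ring, show p * 1 + q * 1 = p + q by ring,
    show p * 1 - q * -1 = p + q by ring, show p * -1 + q * 1 = -(p - q) by ring,
    show p * -1 - q * 1 = -(p + q) by ring, show p * 1 + q * -1 = p - q by ring,
    show p * -1 - q * -1 = -(p - q) by ring, show p * -1 + q * -1 = -(p + q) by ring,
    binEnt_gaussQ_even, binEnt_gaussQ_even]
  ring

lemma hHsum_eq_one (p q : ℝ) :
    ∑ y : Bool × Bool, (1/4 : ℝ) * ∑ s : Bool × Bool, PP p q s y = 1 := by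
  rw [← Finset.mul_sum, Finset.sum_comm,
    Finset.sum_congr rfl (fun s _ => PP_rowsum p q s)]
  simp

lemma hHsum_le (p q : ℝ) :
    ∑ y : Bool × Bool, eta ((1/4 : ℝ) * ∑ s : Bool × Bool, PP p q s y) ≤ Real.log 4 := by
  have hnn : ∀ y : Bool × Bool, 0 ≤ (1/4 : ℝ) * ∑ s : Bool × Bool, PP p q s y := by
    intro y
    have : (0:ℝ) ≤ ∑ s : Bool × Bool, PP p q s y :=
      Finset.sum_nonneg fun s _ => (PP_pos p q s y).le
    linarith
  calc ∑ y : Bool × Bool, eta ((1/4 : ℝ) * ∑ s : Bool × Bool, PP p q s y)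
      ≤ ∑ y : Bool × Bool, (1/4 + ((1/4 : ℝ) * ∑ s : Bool × Bool, PP p q s y) * (Real.log 4 - 1)) :=
        Finset.sum_le_sum fun y _ => eta_le_gibbs (hnn y)
    _ = 1 + (∑ y : Bool × Bool, (1/4 : ℝ) * ∑ s : Bool × Bool, PP p q s y) * (Real.log 4 - 1) := by
        rw [Finset.sum_add_distrib, ← Finset.sum_mul]
        simp
    _ = Real.log 4 := by rw [hHsum_eq_one]; ring

lemma mi_le_aux (p q b : ℝ) (hb : 0 ≤ b) (hpq : p ^ 2 + q ^ 2 = b ^ 2) :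
    ∑ y : Bool × Bool,
        (eta ((1/4 : ℝ) * ∑ s : Bool × Bool, PP p q s y)
          - (1/4 : ℝ) * ∑ s : Bool × Bool, eta (PP p q s y))
      ≤ Real.log 4 - 2 * binEnt (gaussQ b) := by
  rw [Finset.sum_sub_distrib, hCsum]
  have hconv : 2 * binEnt (gaussQ b)
      ≤ binEnt (gaussQ (p - q)) + binEnt (gaussQ (p + q)) := by
    rw [binEnt_gaussQ_eq_Ff, binEnt_gaussQ_eq_Ff, binEnt_gaussQ_eq_Ff]
    exact two_point (p - q) (p + q) b hb (by nlinarith)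
  linarith [hHsum_le p q]

lemma mi_eq_aux (a : ℝ) :
    ∑ y : Bool × Bool,
        (eta ((1/4 : ℝ) * ∑ s : Bool × Bool, PP a 0 s y)
          - (1/4 : ℝ) * ∑ s : Bool × Bool, eta (PP a 0 s y))
      = Real.log 4 - 2 * binEnt (gaussQ a) := by
  rw [Finset.sum_sub_distrib, hCsum]
  have hcolsum : ∀ y : Bool × Bool, ∑ s : Bool × Bool, PP a 0 s y = 1 := by
    intro y
    have hform : ∀ s : Bool × Bool, PP a 0 s y
        = gaussQ (-(sgnb s.1) * (sgnb y.1 * a)) * gaussQ (-(sgnb s.2) * (sgnb y.2 * a)) := by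
      intro s; unfold PP
      congr 1 <;> congr 1 <;> ring
    rw [Finset.sum_congr rfl (fun s _ => hform s)]
    exact rowsum (sgnb y.1 * a) (sgnb y.2 * a)
  have hfirst : ∑ y : Bool × Bool, eta ((1/4 : ℝ) * ∑ s : Bool × Bool, PP a 0 s y)
      = Real.log 4 := by
    rw [Finset.sum_congr rfl (fun y _ => by rw [hcolsum y])]
    have heta : eta (1/4 : ℝ) = (1/4) * Real.log 4 := by
      unfold eta
      rw [show (1/4 : ℝ) = 4⁻¹ by norm_num, Real.log_inv]
      ring
    rw [Finset.sum_const]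
    simp only [Finset.card_univ, Fintype.card_prod, Fintype.card_bool, nsmul_eq_mul, mul_one]
    rw [heta]
    ring
  rw [hfirst]
  rw [show a - 0 = a by ring, show a + 0 = a by ring]
  ring

lemma p1bit_eq_PP (w w₁ : ℂ) (J : ℝ) (s y : Bool × Bool) :
    p1bitC w (qpskPts w₁ J s) y
      = PP (w * ((Real.sqrt (J / 2) : ℂ) * Complex.exp (-(Complex.arg w₁ : ℂ) * Complex.I))).re
          (w * ((Real.sqrt (J / 2) : ℂ) * Complex.exp (-(Complex.arg w₁ : ℂ) * Complex.I))).im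
          s y := by
  set B := w * ((Real.sqrt (J / 2) : ℂ) * Complex.exp (-(Complex.arg w₁ : ℂ) * Complex.I)) with hB
  have hz : w * qpskPts w₁ J s = B * ((sgnb s.1 : ℂ) + (sgnb s.2 : ℂ) * Complex.I) := by
    unfold qpskPts; rw [hB]; ring
  have hre : (B * ((sgnb s.1 : ℂ) + (sgnb s.2 : ℂ) * Complex.I)).re
      = B.re * sgnb s.1 - B.im * sgnb s.2 := by
    simp [Complex.mul_re, Complex.add_re, Complex.add_im, Complex.mul_im]
  have him : (B * ((sgnb s.1 : ℂ) + (sgnb s.2 : ℂ) * Complex.I)).im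
      = B.re * sgnb s.2 + B.im * sgnb s.1 := by
    simp [Complex.mul_re, Complex.add_re, Complex.add_im, Complex.mul_im]
  unfold p1bitC PP
  rw [hz, hre, him]

/-- Appendix: for the complex Gaussian wiretap channel with per-component one-bit ADCs
at both receivers and `|w₁| > |w₂|`, the QPSK rotated by `-arg w₁` with power `J`
achieves `I₁ - I₂ ≥ 2(h(Q(|w₂|√(J/2))) - h(Q(|w₁|√(J/2)))) > 0`. -/
theorem qpsk_positive_secrecy (w₁ w₂ : ℂ) (hw₁ : w₁ ≠ 0) (hw₂ : w₂ ≠ 0)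
    (hgt : ‖w₂‖ < ‖w₁‖) (J : ℝ) (hJ : 0 < J) :
    2 * (binEnt (gaussQ (‖w₂‖ * Real.sqrt (J / 2)))
          - binEnt (gaussQ (‖w₁‖ * Real.sqrt (J / 2))))
        ≤ miUnif4 w₁ (qpskPts w₁ J) - miUnif4 w₂ (qpskPts w₁ J) ∧
      0 < 2 * (binEnt (gaussQ (‖w₂‖ * Real.sqrt (J / 2)))
          - binEnt (gaussQ (‖w₁‖ * Real.sqrt (J / 2)))) := by
  have hcpos : 0 < Real.sqrt (J / 2) := Real.sqrt_pos.2 (by positivity)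
  set c := Real.sqrt (J / 2) with hc
  set rot := Complex.exp (-(Complex.arg w₁ : ℂ) * Complex.I) with hrot
  -- the aligned gain is real
  have hB1 : w₁ * ((c : ℂ) * rot) = ((‖w₁‖ * c : ℝ) : ℂ) := by
    have habs : (‖w₁‖ : ℂ) * Complex.exp (Complex.arg w₁ * Complex.I) = w₁ :=
      Complex.norm_mul_exp_arg_mul_I w₁
    have hrot1 : w₁ * rot = (‖w₁‖ : ℂ) := by
      rw [hrot, ← habs, mul_assoc, ← Complex.exp_add]
      norm_num
    calc w₁ * ((c : ℂ) * rot) = (c : ℂ) * (w₁ * rot) := by ring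
      _ = ((‖w₁‖ * c : ℝ) : ℂ) := by rw [hrot1]; push_cast; ring
  have hp1 : (w₁ * ((c : ℂ) * rot)).re = ‖w₁‖ * c := by rw [hB1]; simp
  have hq1 : (w₁ * ((c : ℂ) * rot)).im = 0 := by rw [hB1]; simp
  have hI1 : miUnif4 w₁ (qpskPts w₁ J)
      = Real.log 4 - 2 * binEnt (gaussQ (‖w₁‖ * c)) := by
    unfold miUnif4
    rw [← mi_eq_aux (‖w₁‖ * c)]
    refine Finset.sum_congr rfl fun y _ => ?_
    have h4 : ∀ s : Bool × Bool, p1bitC w₁ (qpskPts w₁ J s) y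
        = PP (‖w₁‖ * c) 0 s y := by
      intro s
      rw [p1bit_eq_PP w₁ w₁ J s y, ← hc, ← hrot, hp1, hq1]
    rw [show (∑ s : Bool × Bool, p1bitC w₁ (qpskPts w₁ J s) y)
        = ∑ s : Bool × Bool, PP (‖w₁‖ * c) 0 s y from
        Finset.sum_congr rfl fun s _ => h4 s,
      show (∑ s : Bool × Bool, eta (p1bitC w₁ (qpskPts w₁ J s) y))
        = ∑ s : Bool × Bool, eta (PP (‖w₁‖ * c) 0 s y) from
        Finset.sum_congr rfl fun s _ => by rw [h4 s]]
  set p := (w₂ * ((c : ℂ) * rot)).re with hp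
  set q := (w₂ * ((c : ℂ) * rot)).im with hq
  have habs2 : p ^ 2 + q ^ 2 = (‖w₂‖ * c) ^ 2 := by
    have h1 : p ^ 2 + q ^ 2 = Complex.normSq (w₂ * ((c : ℂ) * rot)) := by
      rw [Complex.normSq_apply, hp, hq]; ring
    have h2 : ‖rot‖ = 1 := by
      rw [hrot, Complex.norm_exp]
      norm_num
    rw [h1, ← Complex.sq_norm, norm_mul, norm_mul, h2, Complex.norm_real, Real.norm_eq_abs,
      abs_of_nonneg hcpos.le, mul_one]
  have hI2 : miUnif4 w₂ (qpskPts w₁ J)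
      ≤ Real.log 4 - 2 * binEnt (gaussQ (‖w₂‖ * c)) := by
    have hform : miUnif4 w₂ (qpskPts w₁ J)
        = ∑ y : Bool × Bool,
            (eta ((1/4 : ℝ) * ∑ s : Bool × Bool, PP p q s y)
              - (1/4 : ℝ) * ∑ s : Bool × Bool, eta (PP p q s y)) := by
      unfold miUnif4
      refine Finset.sum_congr rfl fun y _ => ?_
      have h4 : ∀ s : Bool × Bool, p1bitC w₂ (qpskPts w₁ J s) y = PP p q s y := by
        intro s
        rw [p1bit_eq_PP w₂ w₁ J s y, ← hc, ← hrot, ← hp, ← hq]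
      rw [show (∑ s : Bool × Bool, p1bitC w₂ (qpskPts w₁ J s) y)
          = ∑ s : Bool × Bool, PP p q s y from
          Finset.sum_congr rfl fun s _ => h4 s,
        show (∑ s : Bool × Bool, eta (p1bitC w₂ (qpskPts w₁ J s) y))
          = ∑ s : Bool × Bool, eta (PP p q s y) from
          Finset.sum_congr rfl fun s _ => by rw [h4 s]]
    rw [hform]
    exact mi_le_aux p q (‖w₂‖ * c) (by positivity) habs2
  have hb2pos : 0 < ‖w₂‖ * c := mul_pos (norm_pos_iff.2 hw₂) hcpos
  have hlt : ‖w₂‖ * c < ‖w₁‖ * c := by nlinarith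
  have hQlt : gaussQ (‖w₁‖ * c) < gaussQ (‖w₂‖ * c) :=
    strictAnti_gaussQ hlt
  have hQhalf : gaussQ (‖w₂‖ * c) ≤ 1/2 := (gaussQ_lt_half hb2pos).le
  have hmono := binEnt_strictMono (gaussQ_pos _) hQlt hQhalf
  constructor
  · linarith [hI1, hI2]
  · linarith [hmono]
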